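/- Let β > 0 and μ ∈ ℝ, and define the logistic inverse demand P(q) = μ − β·log(q/(1−q)) for q ∈ (0,1). Then the consumer surplus CS(q) := ∫₀^q P(x) dx − q·P(q) equals −β·log(1 − q) for all q ∈ (0,1), and the function f : (−∞, 0) → ℝ defined by f(s) = CS(e^s) = −β·log(1 − e^s) has nonnegative derivatives of every order: f⁽ⁿ⁾(s) ≥ 0 for all n ∈ ℕ and all s < 0. -/

import Mathlib

open Real Set

/-- Logistic-distribution inverse demand `P(q) = μ - β·log(q/(1-q))`. -/
noncomputable def logisticP (β μ : ℝ) : ℝ → ℝ := fun q => μ - β * Real.log (q / (1 - q))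

/- ### Auxiliaries for part 2 -/

noncomputable def vfun (s : ℝ) : ℝ := Real.exp s / (1 - Real.exp s)

noncomputable def pseq : ℕ → Polynomial ℝ
  | 0 => Polynomial.X
  | (n+1) => (pseq n).derivative * (Polynomial.X ^ 2 + Polynomial.X)

lemma coeff_mul_nonneg {p q : Polynomial ℝ} (hp : ∀ k, 0 ≤ p.coeff k)
    (hq : ∀ k, 0 ≤ q.coeff k) : ∀ k, 0 ≤ (p * q).coeff k := by
  intro k
  rw [Polynomial.coeff_mul]
  exact Finset.sum_nonneg fun ij _ => mul_nonneg (hp _) (hq _)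

lemma pseq_coeff_nonneg : ∀ n k, 0 ≤ (pseq n).coeff k := by
  intro n
  induction n with
  | zero =>
    intro k
    simp only [pseq, Polynomial.coeff_X]
    split_ifs <;> norm_num
  | succ n ih =>
    have hd : ∀ k, 0 ≤ (pseq n).derivative.coeff k := by
      intro k
      rw [Polynomial.coeff_derivative]
      exact mul_nonneg (ih _) (by positivity)
    have hx : ∀ k, 0 ≤ (Polynomial.X ^ 2 + Polynomial.X : Polynomial ℝ).coeff k := by
      intro k
      rw [Polynomial.coeff_add, Polynomial.coeff_X_pow, Polynomial.coeff_X]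
      split_ifs <;> norm_num
    exact coeff_mul_nonneg hd hx

lemma eval_nonneg_of_coeff_nonneg {p : Polynomial ℝ} (hp : ∀ k, 0 ≤ p.coeff k)
    {x : ℝ} (hx : 0 ≤ x) : 0 ≤ p.eval x := by
  rw [Polynomial.eval_eq_sum_range]
  exact Finset.sum_nonneg fun i _ => mul_nonneg (hp i) (pow_nonneg hx i)

lemma exp_lt_one_of_neg {s : ℝ} (hs : s < 0) : Real.exp s < 1 := by
  simpa using Real.exp_lt_exp.2 hs

lemma one_sub_exp_pos {s : ℝ} (hs : s < 0) : 0 < 1 - Real.exp s :=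
  sub_pos.2 (exp_lt_one_of_neg hs)

lemma vfun_nonneg {s : ℝ} (hs : s < 0) : 0 ≤ vfun s :=
  div_nonneg (Real.exp_pos s).le (one_sub_exp_pos hs).le

lemma hasDerivAt_vfun {s : ℝ} (hs : s < 0) :
    HasDerivAt vfun (vfun s ^ 2 + vfun s) s := by
  have h1 : 1 - Real.exp s ≠ 0 := (one_sub_exp_pos hs).ne'
  have h : HasDerivAt (fun t => Real.exp t / (1 - Real.exp t))
      ((Real.exp s * (1 - Real.exp s) - Real.exp s * (0 - Real.exp s)) / (1 - Real.exp s) ^ 2)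
      s := (Real.hasDerivAt_exp s).div ((hasDerivAt_const s 1).sub (Real.hasDerivAt_exp s)) h1
  refine h.congr_deriv ?_
  unfold vfun
  field_simp
  ring

lemma hasDerivAt_f (β : ℝ) {s : ℝ} (hs : s < 0) :
    HasDerivAt (fun s => -β * Real.log (1 - Real.exp s)) (β * vfun s) s := by
  have h1 : 1 - Real.exp s ≠ 0 := (one_sub_exp_pos hs).ne'
  have h : HasDerivAt (fun t => 1 - Real.exp t) (0 - Real.exp s) s :=
    (hasDerivAt_const s 1).sub (Real.hasDerivAt_exp s)
  have hlog : HasDerivAt (fun t => Real.log (1 - Real.exp t))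
      ((0 - Real.exp s) / (1 - Real.exp s)) s := h.log h1
  have := hlog.const_mul (-β)
  refine this.congr_deriv ?_
  unfold vfun
  field_simp
  ring

lemma key_deriv (β : ℝ) (n : ℕ) : ∀ s < (0:ℝ),
    iteratedDeriv (n + 1) (fun s => -β * Real.log (1 - Real.exp s)) s
      = β * (pseq n).eval (vfun s) := by
  induction n with
  | zero =>
    intro s hs
    rw [iteratedDeriv_one, (hasDerivAt_f β hs).deriv]
    simp [pseq]
  | succ n ih =>
    intro s hs
    rw [iteratedDeriv_succ]
    have hev : iteratedDeriv (n + 1) (fun s => -β * Real.log (1 - Real.exp s))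
        =ᶠ[nhds s] fun t => β * (pseq n).eval (vfun t) :=
      Filter.eventuallyEq_of_mem (Iio_mem_nhds hs) (fun t ht => ih t ht)
    rw [hev.deriv_eq]
    have hpd : HasDerivAt (fun t => β * (pseq n).eval (vfun t))
        (β * ((pseq n).derivative.eval (vfun s) * (vfun s ^ 2 + vfun s))) s :=
      (((pseq n).hasDerivAt (vfun s)).comp s (hasDerivAt_vfun hs)).const_mul β
    rw [hpd.deriv]
    simp [pseq, mul_assoc]

/- ### Auxiliaries for part 1 -/

lemma intervalIntegrable_log_zero (q : ℝ) (hq0 : 0 < q) (hq1 : q < 1) :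
    IntervalIntegrable Real.log MeasureTheory.volume 0 q := by
  have hg : ContinuousOn (fun x : ℝ => x - x * Real.log x) (Set.uIcc 0 q) :=
    (continuous_id.sub Real.continuous_mul_log).continuousOn
  have hgd : ∀ x ∈ Set.Ioo (min (0:ℝ) q) (max 0 q),
      HasDerivAt (fun x : ℝ => x - x * Real.log x) ((fun x => -Real.log x) x) x := by
    intro x hx
    rw [min_eq_left hq0.le, max_eq_right hq0.le] at hx
    have h := (hasDerivAt_id x).sub (Real.hasDerivAt_mul_log hx.1.ne')
    refine h.congr_deriv ?_
    ring
  have hpos : ∀ x ∈ Set.Ioo (min (0:ℝ) q) (max 0 q), 0 ≤ (fun x => -Real.log x) x := by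
    intro x hx
    rw [min_eq_left hq0.le, max_eq_right hq0.le] at hx
    have : Real.log x ≤ 0 := Real.log_nonpos hx.1.le (le_of_lt (hx.2.trans hq1))
    simpa using this
  have h := intervalIntegral.intervalIntegrable_deriv_of_nonneg hg hgd hpos
  have h2 := h.neg
  have h3 : (-(fun x : ℝ => -Real.log x)) = Real.log := by funext x; simp
  rwa [h3] at h2

lemma integral_log_zero_to (q : ℝ) (hq0 : 0 < q) (hq1 : q < 1) :
    (∫ x in (0:ℝ)..q, Real.log x) = q * Real.log q - q := by
  have hF : ContinuousOn (fun x : ℝ => x * Real.log x - x) (Set.Icc 0 q) :=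
    (Real.continuous_mul_log.sub continuous_id).continuousOn
  have hderiv : ∀ x ∈ Set.Ioo (0:ℝ) q,
      HasDerivWithinAt (fun x : ℝ => x * Real.log x - x) (Real.log x) (Set.Ioi x) x := by
    intro x hx
    have h := (Real.hasDerivAt_mul_log hx.1.ne').sub (hasDerivAt_id x)
    exact h.hasDerivWithinAt.congr_deriv (by ring)
  have hint : IntervalIntegrable Real.log MeasureTheory.volume 0 q :=
    intervalIntegrable_log_zero q hq0 hq1
  have h := intervalIntegral.integral_eq_sub_of_hasDeriv_right_of_le hq0.le hF hderiv hint
  simpa using h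

lemma integral_log_one_sub (q : ℝ) (hq0 : 0 < q) (hq1 : q < 1) :
    (∫ x in (0:ℝ)..q, Real.log (1 - x)) = -q - (1 - q) * Real.log (1 - q) := by
  have hderiv : ∀ x ∈ Set.uIcc (0:ℝ) q,
      HasDerivAt (fun x : ℝ => -x - (1 - x) * Real.log (1 - x)) (Real.log (1 - x)) x := by
    intro x hx
    rw [Set.uIcc_of_le hq0.le] at hx
    have hx1 : (1 : ℝ) - x ≠ 0 := by
      have : x < 1 := lt_of_le_of_lt hx.2 hq1
      intro h; linarith [sub_eq_zero.1 h]
    have h1 : HasDerivAt (fun x : ℝ => 1 - x) (-1) x := by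
      exact ((hasDerivAt_const x (1:ℝ)).sub (hasDerivAt_id x)).congr_deriv (by ring)
    have h2 : HasDerivAt (fun x : ℝ => (1 - x) * Real.log (1 - x))
        ((Real.log (1 - x) + 1) * (-1)) x :=
      (Real.hasDerivAt_mul_log hx1).comp x h1
    have h := ((hasDerivAt_id x).neg).sub h2
    refine h.congr_deriv ?_
    ring
  have hint : IntervalIntegrable (fun x => Real.log (1 - x)) MeasureTheory.volume 0 q := by
    apply ContinuousOn.intervalIntegrable
    apply ContinuousOn.log
    · exact (continuous_const.sub continuous_id).continuousOn
    · intro x hx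
      rw [Set.uIcc_of_le hq0.le] at hx
      have : x < 1 := lt_of_le_of_lt hx.2 hq1
      intro h; linarith [sub_eq_zero.1 h]
  have h := intervalIntegral.integral_eq_sub_of_hasDerivAt hderiv hint
  simpa using h

/-- **Complete monotonicity for the logistic demand specification.**  For logistic inverse
demand, the consumer surplus `CS(q) = ∫₀^q P - q·P(q)` equals `-β·log(1-q)` on `(0,1)`, and
`f(s) = CS(e^s) = -β·log(1-e^s)` has nonnegative derivatives of every order on `(-∞,0)`. -/
theorem stmt7 (β μ : ℝ) (hβ : 0 < β) :
    (∀ q ∈ Set.Ioo (0 : ℝ) 1,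
      (∫ x in (0 : ℝ)..q, logisticP β μ x) - q * logisticP β μ q = -β * Real.log (1 - q)) ∧
    (∀ (n : ℕ), ∀ s < (0 : ℝ),
      0 ≤ iteratedDeriv n (fun s => -β * Real.log (1 - Real.exp s)) s) := by
  constructor
  · intro q hq
    obtain ⟨hq0, hq1⟩ := hq
    have h1q : (0:ℝ) < 1 - q := by linarith
    -- rewrite the integrand
    have hcongr : (∫ x in (0:ℝ)..q, logisticP β μ x)
        = ∫ x in (0:ℝ)..q, (μ - β * (Real.log x - Real.log (1 - x))) := by
      apply intervalIntegral.integral_congr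
      intro x hx
      rw [Set.uIcc_of_le hq0.le] at hx
      unfold logisticP
      rcases eq_or_lt_of_le hx.1 with h | h
      · simp [← h]
      · have hx1 : (0:ℝ) < 1 - x := by
          have : x < 1 := lt_of_le_of_lt hx.2 hq1
          linarith
        rw [Real.log_div h.ne' hx1.ne']
    have hintlog : IntervalIntegrable Real.log MeasureTheory.volume 0 q :=
      intervalIntegrable_log_zero q hq0 hq1
    have hintlog1 : IntervalIntegrable (fun x => Real.log (1 - x)) MeasureTheory.volume 0 q := by
      apply ContinuousOn.intervalIntegrable
      apply ContinuousOn.log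
      · exact (continuous_const.sub continuous_id).continuousOn
      · intro x hx
        rw [Set.uIcc_of_le hq0.le] at hx
        have : x < 1 := lt_of_le_of_lt hx.2 hq1
        intro h; linarith [sub_eq_zero.1 h]
    have hsplit : (∫ x in (0:ℝ)..q, (μ - β * (Real.log x - Real.log (1 - x))))
        = μ * q - β * ((∫ x in (0:ℝ)..q, Real.log x) - ∫ x in (0:ℝ)..q, Real.log (1 - x)) := by
      rw [intervalIntegral.integral_sub intervalIntegrable_const
            ((hintlog.sub hintlog1).const_mul β),
          intervalIntegral.integral_const_mul,
          intervalIntegral.integral_sub hintlog hintlog1]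
      simp [mul_comm]
    rw [hcongr, hsplit, integral_log_zero_to q hq0 hq1, integral_log_one_sub q hq0 hq1]
    unfold logisticP
    rw [Real.log_div hq0.ne' h1q.ne']
    ring
  · intro n s hs
    cases n with
    | zero =>
      rw [iteratedDeriv_zero]
      have h1 : Real.log (1 - Real.exp s) ≤ 0 :=
        Real.log_nonpos (one_sub_exp_pos hs).le (by linarith [Real.exp_pos s])
      nlinarith
    | succ n =>
      rw [key_deriv β n s hs]
      exact mul_nonneg hβ.le
        (eval_nonneg_of_coeff_nonneg (pseq_coeff_nonneg n) (vfun_nonneg hs))
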